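/- Let d ∈ ℕ, R ≥ 1, ε > 0, and let K̃ ⊆ K ⊆ ℝ^d be nonempty compact convex sets with K ⊆ R·B_d. If K̃ is an ε-kernel of K, then the Hausdorff distance between K̃ and K is at most 2εR. -/

import Mathlib

open Metric Set
open scoped RealInnerProductSpace

noncomputable section

/-- The width of a set `K` in direction `u`. -/
def dirWidth {d : ℕ} (u : EuclideanSpace ℝ (Fin d)) (K : Set (EuclideanSpace ℝ (Fin d))) : ℝ :=
  sSup ((fun x => ⟪u, x⟫) '' K) - sInf ((fun x => ⟪u, x⟫) '' K)

/-- `Kt` is an `ε`-kernel of `K`. -/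
def IsEpsKernel {d : ℕ} (ε : ℝ) (Kt K : Set (EuclideanSpace ℝ (Fin d))) : Prop :=
  Kt ⊆ K ∧ ∀ u : EuclideanSpace ℝ (Fin d), ‖u‖ = 1 →
    (1 - ε) * dirWidth u K ≤ dirWidth u Kt

/-- If `K ⊆ R·B_d` and `Kt` is an `ε`-kernel of `K`, then the Hausdorff distance between
`Kt` and `K` is at most `2εR`. -/
theorem hausdorffDist_le_of_epsKernel (d : ℕ) (R ε : ℝ) (hR : 1 ≤ R) (hε : 0 < ε)
    (Kt K : Set (EuclideanSpace ℝ (Fin d)))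
    (hsub : Kt ⊆ K)
    (hKtne : Kt.Nonempty) (hKne : K.Nonempty)
    (hKtcp : IsCompact Kt) (hKcp : IsCompact K)
    (hKtcv : Convex ℝ Kt) (hKcv : Convex ℝ K)
    (hKR : K ⊆ closedBall (0 : EuclideanSpace ℝ (Fin d)) R)
    (hker : IsEpsKernel ε Kt K) :
    hausdorffDist Kt K ≤ 2 * ε * R := by
  have hR0 : (0:ℝ) ≤ R := zero_le_one.trans hR
  have h2 : (0:ℝ) ≤ 2 * ε * R := by positivity
  apply hausdorffDist_le_of_mem_dist h2
  · intro x hx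
    exact ⟨x, hsub hx, by simpa using h2⟩
  · intro x hx
    obtain ⟨y, hyKt, hy⟩ := hKtcp.exists_infDist_eq_dist hKtne x
    refine ⟨y, hyKt, ?_⟩
    by_cases hxKt : x ∈ Kt
    · rw [← hy, infDist_zero_of_mem hxKt]; exact h2
    have hD0 : 0 < dist x y := by
      rw [← hy]
      exact ((hKtcp.isClosed.notMem_iff_infDist_pos hKtne).1 hxKt)
    set D : ℝ := dist x y with hDdef
    have hDnorm : D = ‖x - y‖ := dist_eq_norm x y
    set u : EuclideanSpace ℝ (Fin d) := D⁻¹ • (x - y) with hu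
    have hunorm : ‖u‖ = 1 := by
      rw [hu, norm_smul, ← hDnorm, norm_inv, Real.norm_of_nonneg hD0.le]
      field_simp
    -- projection characterization
    have hiInf : ‖x - y‖ = ⨅ w : Kt, ‖x - w‖ := by
      rw [← hDnorm, ← hy, infDist_eq_iInf]
      simp_rw [dist_eq_norm]
    have hproj : ∀ w ∈ Kt, ⟪x - y, w - y⟫ ≤ 0 :=
      (norm_eq_iInf_iff_real_inner_le_zero hKtcv hyKt).1 hiInf
    -- basic facts about the support function
    have hcont : Continuous fun z : EuclideanSpace ℝ (Fin d) => ⟪u, z⟫ :=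
      continuous_const.inner continuous_id
    have hbddAK : BddAbove ((fun z => ⟪u, z⟫) '' K) := (hKcp.image hcont).bddAbove
    have hbddBK : BddBelow ((fun z => ⟪u, z⟫) '' K) := (hKcp.image hcont).bddBelow
    have hneK : ((fun z => ⟪u, z⟫) '' K).Nonempty := hKne.image _
    have hneKt : ((fun z => ⟪u, z⟫) '' Kt).Nonempty := hKtne.image _
    -- sup over Kt is at most ⟪u, y⟫
    have hsupKt : sSup ((fun z => ⟪u, z⟫) '' Kt) ≤ ⟪u, y⟫ := by
      apply csSup_le hneKt
      rintro _ ⟨z, hz, rfl⟩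
      have h1 : ⟪u, z - y⟫ ≤ 0 := by
        rw [hu, real_inner_smul_left]
        exact mul_nonpos_of_nonneg_of_nonpos (inv_nonneg.2 hD0.le) (hproj z hz)
      have := inner_sub_right (𝕜 := ℝ) u z y
      linarith [this ▸ h1]
    -- infima comparison
    have hinf : sInf ((fun z => ⟪u, z⟫) '' K) ≤ sInf ((fun z => ⟪u, z⟫) '' Kt) :=
      csInf_le_csInf hbddBK hneKt (image_mono hsub)
    -- ⟪u, x⟫ = ⟪u, y⟫ + D
    have hux : ⟪u, x⟫ = ⟪u, y⟫ + D := by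
      have h1 : ⟪u, x - y⟫ = D := by
        rw [hu, real_inner_smul_left, real_inner_self_eq_norm_sq, ← hDnorm]
        field_simp
      have := inner_sub_right (𝕜 := ℝ) u x y
      linarith [this ▸ h1]
    have hsupK : ⟪u, x⟫ ≤ sSup ((fun z => ⟪u, z⟫) '' K) :=
      le_csSup hbddAK ⟨x, hx, rfl⟩
    -- width of K bounded by 2R
    have habs : ∀ z ∈ K, |⟪u, z⟫| ≤ R := by
      intro z hz
      calc |⟪u, z⟫| ≤ ‖u‖ * ‖z‖ := abs_real_inner_le_norm u z
        _ = ‖z‖ := by rw [hunorm, one_mul]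
        _ ≤ R := by simpa using mem_closedBall_zero_iff.1 (hKR hz)
    have hsupR : sSup ((fun z => ⟪u, z⟫) '' K) ≤ R := by
      apply csSup_le hneK
      rintro _ ⟨z, hz, rfl⟩
      exact (abs_le.1 (habs z hz)).2
    have hinfR : -R ≤ sInf ((fun z => ⟪u, z⟫) '' K) := by
      apply le_csInf hneK
      rintro _ ⟨z, hz, rfl⟩
      exact (abs_le.1 (habs z hz)).1
    have hWle : dirWidth u K ≤ 2 * R := by
      unfold dirWidth; linarith
    have hker' := hker.2 u hunorm
    have hWtle : dirWidth u Kt ≤ dirWidth u K - D := by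
      unfold dirWidth
      have : ⟪u, y⟫ + D ≤ sSup ((fun z => ⟪u, z⟫) '' K) := hux ▸ hsupK
      linarith
    have hDle : D ≤ ε * dirWidth u K := by linarith
    calc D ≤ ε * dirWidth u K := hDle
      _ ≤ ε * (2 * R) := mul_le_mul_of_nonneg_left hWle hε.le
      _ = 2 * ε * R := by ring
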